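/- Let f(x) = (x−1)^6 and g(x) = (x²+x+1)²(x²−x+1), let A, B ∈ GL₆(ℤ) be their companion matrices, and let v = (A⁻¹B − I)(e₆). Then v = (−7, 13, −21, 13, −7, 0), and the matrix γ = A²·B·A⁻¹·B⁴·A satisfies: the coefficient of e₆ in γ(v) lies in {1, −1, 2, −2}, and the three vectors v, γ(v), γ⁻¹(v) are linearly independent over ℚ. -/

import Mathlib

open Matrix Polynomial

/-- The companion matrix of a monic polynomial `p` of degree `n`: it sends
`e_i ↦ e_{i+1}` for `1 ≤ i ≤ n-1` (zero-indexed: column `j` is `e_{j+1}` when `j+1 < n`),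
and `e_n ↦ -(c_0 e_1 + c_1 e_2 + ⋯ + c_{n-1} e_n)`. -/
def companionMat (n : ℕ) (p : Polynomial ℤ) : Matrix (Fin n) (Fin n) ℤ :=
  Matrix.of fun i j =>
    if (j : ℕ) + 1 < n then (if (i : ℕ) = (j : ℕ) + 1 then 1 else 0) else -p.coeff (i : ℕ)

def Am : Matrix (Fin 6) (Fin 6) ℤ := !![
  0, 0, 0, 0, 0, -1;
  1, 0, 0, 0, 0, 6;
  0, 1, 0, 0, 0, -15;
  0, 0, 1, 0, 0, 20;
  0, 0, 0, 1, 0, -15;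
  0, 0, 0, 0, 1, 6]

def Bm : Matrix (Fin 6) (Fin 6) ℤ := !![
  0, 0, 0, 0, 0, -1;
  1, 0, 0, 0, 0, -1;
  0, 1, 0, 0, 0, -2;
  0, 0, 1, 0, 0, -1;
  0, 0, 0, 1, 0, -2;
  0, 0, 0, 0, 1, -1]

def Aim : Matrix (Fin 6) (Fin 6) ℤ := !![
  6, 1, 0, 0, 0, 0;
  -15, 0, 1, 0, 0, 0;
  20, 0, 0, 1, 0, 0;
  -15, 0, 0, 0, 1, 0;
  6, 0, 0, 0, 0, 1;
  -1, 0, 0, 0, 0, 0]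

def Bim : Matrix (Fin 6) (Fin 6) ℤ := !![
  -1, 1, 0, 0, 0, 0;
  -2, 0, 1, 0, 0, 0;
  -1, 0, 0, 1, 0, 0;
  -2, 0, 0, 0, 1, 0;
  -1, 0, 0, 0, 0, 1;
  -1, 0, 0, 0, 0, 0]

def Gm : Matrix (Fin 6) (Fin 6) ℤ := !![
  -6, 37, -24, -42, 66, -44;
  35, -214, 138, 243, -381, 243;
  -84, 506, -323, -575, 898, -526;
  105, -628, 397, 714, -1110, 600;
  -70, 406, -252, -461, 714, -336;
  21, -124, 74, 140, -213, 82]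

def Gim : Matrix (Fin 6) (Fin 6) ℤ := !![
  1016, 310, 75, 13, -5, -8;
  -287, -176, -96, -28, 14, 14;
  952, 394, 159, 42, -19, -22;
  70, -84, -84, -28, 15, 14;
  644, 212, 61, 13, -5, -7;
  0, -7, -6, -2, 1, 1]

set_option maxHeartbeats 1000000 in
/-- for γ = A²BA⁻¹B⁴A the coefficient of e₆ in γ(v) lies in {1, -1, 2, -2} and v, γ(v), γ⁻¹(v) are linearly independent over ℚ. -/
theorem entry17_certificate (f g : Polynomial ℤ)
    (hf : f = (Polynomial.X - 1) ^ 6)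
    (hg : g = (Polynomial.X ^ 2 + Polynomial.X + 1) ^ 2 * (Polynomial.X ^ 2 - Polynomial.X + 1))
    (A B : GL (Fin 6) ℤ)
    (hA : (A : Matrix (Fin 6) (Fin 6) ℤ) = companionMat 6 f)
    (hB : (B : Matrix (Fin 6) (Fin 6) ℤ) = companionMat 6 g)
    (v : Fin 6 → ℤ)
    (hv : v = ((A⁻¹ * B : GL (Fin 6) ℤ) : Matrix (Fin 6) (Fin 6) ℤ) *ᵥ
      Pi.single (5 : Fin 6) 1 - Pi.single (5 : Fin 6) 1)
    (γ : GL (Fin 6) ℤ) (hγ : γ = A ^ 2 * B * A⁻¹ * B ^ 4 * A) :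
    v = ![-7, 13, -21, 13, -7, 0] ∧
    ((γ : Matrix (Fin 6) (Fin 6) ℤ) *ᵥ v) 5 ∈ ({1, -1, 2, -2} : Set ℤ) ∧
    LinearIndependent ℚ
      ![(fun i => (v i : ℚ)),
        (fun i => (((γ : Matrix (Fin 6) (Fin 6) ℤ) *ᵥ v) i : ℚ)),
        (fun i => (((↑γ⁻¹ : Matrix (Fin 6) (Fin 6) ℤ) *ᵥ v) i : ℚ))] := by
  have hfex : f = Polynomial.X ^ 6 - 6 * Polynomial.X ^ 5 + 15 * Polynomial.X ^ 4 -
      20 * Polynomial.X ^ 3 + 15 * Polynomial.X ^ 2 - 6 * Polynomial.X + 1 := by rw [hf]; ring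
  have hgex : g = Polynomial.X ^ 6 + Polynomial.X ^ 5 + 2 * Polynomial.X ^ 4 +
      Polynomial.X ^ 3 + 2 * Polynomial.X ^ 2 + Polynomial.X + 1 := by rw [hg]; ring
  have cf : ∀ k : Fin 6, f.coeff (k : ℕ) = ![1, -6, 15, -20, 15, -6] k := by
    intro k
    fin_cases k <;>
      · rw [hfex]
        norm_num [Polynomial.coeff_one, Polynomial.coeff_X]
  have cg : ∀ k : Fin 6, g.coeff (k : ℕ) = ![1, 1, 2, 1, 2, 1] k := by
    intro k
    fin_cases k <;>
      · rw [hgex]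
        norm_num [Polynomial.coeff_one, Polynomial.coeff_X]
  have hfe : companionMat 6 f = Am := by
    ext i j
    simp only [companionMat, Matrix.of_apply]
    rw [cf i]
    fin_cases i <;> fin_cases j <;> decide
  have hge : companionMat 6 g = Bm := by
    ext i j
    simp only [companionMat, Matrix.of_apply]
    rw [cg i]
    fin_cases i <;> fin_cases j <;> decide
  rw [hfe] at hA
  rw [hge] at hB
  have hAi : ((A⁻¹ : GL (Fin 6) ℤ) : Matrix (Fin 6) (Fin 6) ℤ) = Aim := by
    have h1 : Am * Aim = 1 := by decide
    calc ((A⁻¹ : GL (Fin 6) ℤ) : Matrix (Fin 6) (Fin 6) ℤ)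
        = ↑A⁻¹ * (Am * Aim) := by rw [h1, mul_one]
      _ = (↑A⁻¹ * ↑A) * Aim := by rw [hA, mul_assoc]
      _ = Aim := by rw [← Units.val_mul, inv_mul_cancel, Units.val_one, one_mul]
  have hγm : ((γ : GL (Fin 6) ℤ) : Matrix (Fin 6) (Fin 6) ℤ) = Gm := by
    rw [hγ]
    simp only [Units.val_mul, Units.val_pow_eq_pow_val, hA, hB, hAi]
    decide
  have hγi : ((γ⁻¹ : GL (Fin 6) ℤ) : Matrix (Fin 6) (Fin 6) ℤ) = Gim := by
    have h1 : Gm * Gim = 1 := by decide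
    calc ((γ⁻¹ : GL (Fin 6) ℤ) : Matrix (Fin 6) (Fin 6) ℤ)
        = ↑γ⁻¹ * (Gm * Gim) := by rw [h1, mul_one]
      _ = (↑γ⁻¹ * ↑γ) * Gim := by rw [hγm, mul_assoc]
      _ = Gim := by rw [← Units.val_mul, inv_mul_cancel, Units.val_one, one_mul]
  have hv' : v = ![-7, 13, -21, 13, -7, 0] := by
    rw [hv, Units.val_mul, hAi, hB]
    decide
  have hgv : Gm *ᵥ ![-7, 13, -21, 13, -7, 0] = ![19, -99, 188, -184, 69, -2] := by decide
  have hgiv : Gim *ᵥ ![-7, 13, -21, 13, -7, 0] = ![-4453, 1275, -4202, -287, -2829, 2] := by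
    decide
  refine ⟨hv', ?_, ?_⟩
  · rw [hγm, hv', hgv]
    simp only [Set.mem_insert_iff, Set.mem_singleton_iff]
    decide
  · rw [hγm, hγi, hv', hgv, hgiv]
    apply LinearIndependent.of_comp (LinearMap.funLeft ℚ ℚ (![0, 1, 2] : Fin 3 → Fin 6))
    have hM : (LinearMap.funLeft ℚ ℚ (![0, 1, 2] : Fin 3 → Fin 6)) ∘
        ![(fun i => ((![-7, 13, -21, 13, -7, 0] : Fin 6 → ℤ) i : ℚ)),
          (fun i => ((![19, -99, 188, -184, 69, -2] : Fin 6 → ℤ) i : ℚ)),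
          (fun i => ((![-4453, 1275, -4202, -287, -2829, 2] : Fin 6 → ℤ) i : ℚ))] =
        fun i => (!![-7, 13, -21; 19, -99, 188; -4453, 1275, -4202] : Matrix (Fin 3) (Fin 3) ℚ) i := by
      funext i j
      fin_cases i <;> fin_cases j <;>
        norm_num [LinearMap.funLeft, Matrix.cons_val_two, Matrix.vecHead, Matrix.vecTail]
    rw [hM]
    change LinearIndependent ℚ (Matrix.row (!![-7, 13, -21; 19, -99, 188; -4453, 1275, -4202] : Matrix (Fin 3) (Fin 3) ℚ))
    rw [Matrix.linearIndependent_rows_iff_isUnit, Matrix.isUnit_iff_isUnit_det,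
      isUnit_iff_ne_zero, Matrix.det_fin_three]
    norm_num [Matrix.cons_val_two, Matrix.vecHead, Matrix.vecTail]
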